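/- arXiv:1704.06622 — 8 statements merged into one kernel-verified Lean document; each statement's English description precedes it below -/
import Mathlib

section
/- Let G be a ρ-vertex-connected graph, let e = (x,y) and e' = (u,v) be distinct edges neither of which is ρ-critical in G, and suppose X = S ∪ {e'} is a mixed x'-y' cut of size ρ in G−e for some vertices x', y' (so |S| = ρ−1, S a vertex set). Let A be the set of vertices in the connected component of x' in (G−e)−X and let B = V(G) \ (A ∪ S). Then e' has one endpoint in A and one endpoint in B, and e also has one endpoint in A and one endpoint in B. -/
open SimpleGraph

/-- A graph is `ρ`-vertex-connected if it has more than `ρ` vertices and deleting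
any fewer than `ρ` vertices leaves it connected. -/
def KConnected {V : Type*} [Fintype V] (G : SimpleGraph V) (ρ : ℕ) : Prop :=
  ρ < Fintype.card V ∧
    ∀ S : Finset V, S.card < ρ → (G.induce ((↑S : Set V)ᶜ)).Connected

theorem stmt1 {V : Type*} [Fintype V] [DecidableEq V] (G : SimpleGraph V) (ρ : ℕ)
    (hρ : 1 ≤ ρ) (x y u v : V) (hxy : G.Adj x y) (huv : G.Adj u v)
    (hne : s(x, y) ≠ s(u, v))
    (hG : KConnected G ρ)
    (hGe : KConnected (G.deleteEdges {s(x, y)}) ρ)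
    (hGe' : KConnected (G.deleteEdges {s(u, v)}) ρ)
    (x' y' : V) (hx'y' : x' ≠ y') (S : Finset V) (hScard : S.card = ρ - 1)
    (hx'S : x' ∉ S) (hy'S : y' ∉ S)
    -- X = S ∪ {e'} is a mixed x'-y' cut in G - e : every x'-y' walk in G - e
    -- meets S or uses the edge e' = s(u,v)
    (hcut : ∀ p : (G.deleteEdges {s(x, y)}).Walk x' y',
      (∃ z ∈ p.support, z ∈ S) ∨ s(u, v) ∈ p.edges)
    -- A is the vertex set of the connected component of x' in (G - e) - X
    (A B : Set V)
    (hA : A = {z : V | ∃ p : (G.deleteEdges {s(x, y)}).Walk x' z,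
      (∀ q ∈ p.support, q ∉ S) ∧ s(u, v) ∉ p.edges})
    (hB : B = {z : V | z ∉ A ∧ z ∉ (↑S : Set V)}) :
    ((u ∈ A ∧ v ∈ B) ∨ (v ∈ A ∧ u ∈ B)) ∧
      ((x ∈ A ∧ y ∈ B) ∨ (y ∈ A ∧ x ∈ B)) := by
  set G' := G.deleteEdges {s(x, y)} with hG'
  have hSlt : S.card < ρ := by omega
  -- A is closed under edges of G-e avoiding S and not equal to e'
  have hAcl : ∀ a b : V, a ∈ A → G'.Adj a b → b ∉ S → s(a, b) ≠ s(u, v) → b ∈ A := by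
    intro a b ha hab hbS hne'
    rw [hA] at ha ⊢
    obtain ⟨p, hpS, hpe⟩ := ha
    refine ⟨p.concat hab, ?_, ?_⟩
    · intro q hq
      rw [SimpleGraph.Walk.support_concat, List.mem_append] at hq
      rcases hq with hq | hq
      · exact hpS q hq
      · simp only [List.mem_singleton] at hq; subst hq; exact hbS
    · rw [SimpleGraph.Walk.edges_concat, List.concat_eq_append, List.mem_append]
      rintro (h | h)
      · exact hpe h
      · simp only [List.mem_singleton] at h; exact hne' h.symm
  have hx'A : x' ∈ A := by
    rw [hA]
    exact ⟨SimpleGraph.Walk.nil, by simpa using hx'S, by simp⟩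
  have hy'A : y' ∉ A := by
    rw [hA]
    rintro ⟨p, hpS, hpe⟩
    rcases hcut p with ⟨z, hz, hzS⟩ | h
    · exact hpS z hz hzS
    · exact hpe h
  -- membership in B
  have hmemB : ∀ b : V, b ∉ A → b ∉ S → b ∈ B := by
    intro b h1 h2; rw [hB]; exact ⟨h1, h2⟩
  -- First: e' crosses A-B
  have cross1 : (u ∈ A ∧ v ∈ B) ∨ (v ∈ A ∧ u ∈ B) := by
    by_contra hcross
    -- any walk in G-e avoiding S stays in A
    have key : ∀ {c d : V} (p : G'.Walk c d), c ∈ A → (∀ z ∈ p.support, z ∉ S) → d ∈ A := by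
      intro c d p
      induction p with
      | nil => intro h _; exact h
      | @cons c b d h q ih =>
        intro hc hsup
        have hbS : b ∉ S := hsup b (by simp [SimpleGraph.Walk.support_cons])
        have hbA : b ∈ A := by
          by_cases hcb : s(c, b) = s(u, v)
          · by_contra hbA
            have hbB : b ∈ B := hmemB b hbA hbS
            rw [Sym2.eq_iff] at hcb
            rcases hcb with ⟨h1, h2⟩ | ⟨h1, h2⟩
            · exact hcross (Or.inl ⟨h1 ▸ hc, h2 ▸ hbB⟩)
            · exact hcross (Or.inr ⟨h1 ▸ hc, h2 ▸ hbB⟩)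
          · exact hAcl c b hc h hbS hcb
        exact ih hbA (fun z hz => hsup z (by simp [SimpleGraph.Walk.support_cons, hz]))
    -- use ρ-connectivity of G-e : a walk from x' to y' avoiding S
    have hconn := hGe.2 S hSlt
    have hreach := hconn.preconnected ⟨x', by simpa using hx'S⟩ ⟨y', by simpa using hy'S⟩
    obtain ⟨q⟩ := hreach
    let ι : (G'.induce ((↑S : Set V)ᶜ)) →g G' := ⟨Subtype.val, fun h => h⟩
    have := key (q.map ι) hx'A (by
      intro z hz
      rw [SimpleGraph.Walk.support_map, List.mem_map] at hz
      obtain ⟨w, _, hw⟩ := hz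
      have := w.2
      simp only [Set.mem_compl_iff, Finset.mem_coe] at this
      subst hw; exact this)
    exact hy'A this
  refine ⟨cross1, ?_⟩
  -- Second: e crosses A-B
  by_contra hcross
  set G'' := G.deleteEdges {s(u, v)} with hG''
  have key : ∀ {c d : V} (p : G''.Walk c d), c ∈ A → (∀ z ∈ p.support, z ∉ S) → d ∈ A := by
    intro c d p
    induction p with
    | nil => intro h _; exact h
    | @cons c b d h q ih =>
      intro hc hsup
      have hbS : b ∉ S := hsup b (by simp [SimpleGraph.Walk.support_cons])
      have hGcb : G.Adj c b ∧ s(c, b) ∉ ({s(u, v)} : Set (Sym2 V)) := by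
        rwa [hG'', SimpleGraph.deleteEdges_adj] at h
      have hcbuv : s(c, b) ≠ s(u, v) := by
        intro hh; exact hGcb.2 (by simp [hh])
      have hbA : b ∈ A := by
        by_cases hcb : s(c, b) = s(x, y)
        · by_contra hbA
          have hbB : b ∈ B := hmemB b hbA hbS
          rw [Sym2.eq_iff] at hcb
          rcases hcb with ⟨h1, h2⟩ | ⟨h1, h2⟩
          · exact hcross (Or.inl ⟨h1 ▸ hc, h2 ▸ hbB⟩)
          · exact hcross (Or.inr ⟨h1 ▸ hc, h2 ▸ hbB⟩)
        · have hadj : G'.Adj c b := by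
            rw [hG', SimpleGraph.deleteEdges_adj]
            exact ⟨hGcb.1, by simp [hcb]⟩
          exact hAcl c b hc hadj hbS hcbuv
      exact ih hbA (fun z hz => hsup z (by simp [SimpleGraph.Walk.support_cons, hz]))
  have hconn := hGe'.2 S hSlt
  have hreach := hconn.preconnected ⟨x', by simpa using hx'S⟩ ⟨y', by simpa using hy'S⟩
  obtain ⟨q⟩ := hreach
  let ι : (G''.induce ((↑S : Set V)ᶜ)) →g G'' := ⟨Subtype.val, fun h => h⟩
  have := key (q.map ι) hx'A (by
    intro z hz
    rw [SimpleGraph.Walk.support_map, List.mem_map] at hz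
    obtain ⟨w, _, hw⟩ := hz
    have := w.2
    simp only [Set.mem_compl_iff, Finset.mem_coe] at this
    subst hw; exact this)
  exact hy'A this
end

section
/- Let G be a ρ-vertex-connected graph and let e = (x,y) and e' be distinct edges neither of which is ρ-critical in G. If e' is ρ-critical in G−e, then e' participates in every x-y flow of value ρ in G−e; that is, for every collection of ρ pairwise internally vertex-disjoint x-y paths in G−e, at least one of the paths uses the edge e'. -/
open SimpleGraph

/-- Two walks with the same endpoints are internally vertex-disjoint if every
common vertex is one of the endpoints. -/
def IntDisjoint {V : Type*} {G : SimpleGraph V} {x y : V} (p q : G.Walk x y) : Prop :=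
  ∀ v, v ∈ p.support → v ∈ q.support → v = x ∨ v = y

lemma aux_oneEdge {W : Type*} {G H : SimpleGraph W} {u v : W}
    (hsub : ∀ a b : W, G.Adj a b → s(a, b) = s(u, v) ∨ H.Adj a b) :
    ∀ {w : W}, G.Walk w u → H.Reachable w u ∨ H.Reachable w v := by
  intro w p
  induction p with
  | nil => exact Or.inl (Reachable.refl _)
  | cons hab p ih =>
    rcases hsub _ _ hab with heq | hadj
    · rcases Sym2.eq_iff.mp heq with ⟨rfl, rfl⟩ | ⟨rfl, rfl⟩
      · exact Or.inl (Reachable.refl _)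
      · exact Or.inr (Reachable.refl _)
    · rcases ih hsub with h | h
      · exact Or.inl (hadj.reachable.trans h)
      · exact Or.inr (hadj.reachable.trans h)

lemma aux_lift {V : Type*} {G : SimpleGraph V} {s : Set V} {b : V} (hb : b ∈ s) :
    ∀ {a : V} (p : G.Walk a b), (∀ w ∈ p.support, w ∈ s) → ∀ (ha : a ∈ s),
      (G.induce s).Reachable ⟨a, ha⟩ ⟨b, hb⟩ := by
  intro a p
  induction p with
  | nil => intro _ _; exact Reachable.refl _
  | @cons a c _ hac p ih =>
    intro hsupp ha
    have hc : c ∈ s := hsupp c (by simp)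
    have hadj : (G.induce s).Adj ⟨a, ha⟩ ⟨c, hc⟩ := by simpa using hac
    exact hadj.reachable.trans (ih hb (fun w hw => hsupp w (by simp [hw])) hc)


theorem stmt2 {V : Type*} [Fintype V] (G : SimpleGraph V) (ρ : ℕ)
    (hρ : 1 ≤ ρ) (x y u v : V) (hxy : G.Adj x y) (huv : G.Adj u v)
    (hne : s(x, y) ≠ s(u, v))
    (hG : KConnected G ρ)
    (hGe : KConnected (G.deleteEdges {s(x, y)}) ρ)
    (hGe' : KConnected (G.deleteEdges {s(u, v)}) ρ)
    (hcrit : ¬ KConnected ((G.deleteEdges {s(x, y)}).deleteEdges {s(u, v)}) ρ) :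
    ∀ P : Fin ρ → (G.deleteEdges {s(x, y)}).Walk x y,
      (∀ i, (P i).IsPath) → (∀ i j, i ≠ j → IntDisjoint (P i) (P j)) →
      ∃ i, s(u, v) ∈ (P i).edges := by

  intro P hpath hdisj
  by_contra hno
  push_neg at hno
  set G3 := (G.deleteEdges {s(x, y)}).deleteEdges {s(u, v)} with hG3
  -- extract a separating set
  rw [KConnected, not_and] at hcrit
  push_neg at hcrit
  obtain ⟨S, hScard, hdisc⟩ := hcrit hG.1
  -- x ∉ S and y ∉ S
  have hG3adj : ∀ a b : V, G3.Adj a b ↔ G.Adj a b ∧ s(a, b) ≠ s(x, y) ∧ s(a, b) ≠ s(u, v) := by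
    intro a b
    simp only [hG3, deleteEdges_adj, Set.mem_singleton_iff]
    tauto
  have hxS : x ∉ S := by
    intro hxS
    apply hdisc
    have hconn := hGe'.2 S hScard
    have : G3.induce ((↑S : Set V)ᶜ) = (G.deleteEdges {s(u, v)}).induce ((↑S : Set V)ᶜ) := by
      ext a b
      simp only [comap_adj, Function.Embedding.coe_subtype, hG3adj, deleteEdges_adj,
        Set.mem_singleton_iff]
      constructor
      · tauto
      · rintro ⟨h1, h2⟩
        refine ⟨h1, ?_, h2⟩
        intro heq
        rcases Sym2.eq_iff.mp heq with ⟨ha, _⟩ | ⟨_, ha⟩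
        · exact a.2 (by simp [ha, hxS])
        · exact b.2 (by simp [ha, hxS])
    rw [this]
    exact hconn
  have hyS : y ∉ S := by
    intro hyS
    apply hdisc
    have hconn := hGe'.2 S hScard
    have : G3.induce ((↑S : Set V)ᶜ) = (G.deleteEdges {s(u, v)}).induce ((↑S : Set V)ᶜ) := by
      ext a b
      simp only [comap_adj, Function.Embedding.coe_subtype, hG3adj, deleteEdges_adj,
        Set.mem_singleton_iff]
      constructor
      · tauto
      · rintro ⟨h1, h2⟩
        refine ⟨h1, ?_, h2⟩
        intro heq
        rcases Sym2.eq_iff.mp heq with ⟨_, ha⟩ | ⟨ha, _⟩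
        · exact b.2 (by simp [ha, hyS])
        · exact a.2 (by simp [ha, hyS])
    rw [this]
    exact hconn
  have hxs : x ∈ ((↑S : Set V)ᶜ) := by simpa using hxS
  have hys : y ∈ ((↑S : Set V)ᶜ) := by simpa using hyS
  set x' : ((↑S : Set V)ᶜ : Set V) := ⟨x, hxs⟩ with hx'
  set y' : ((↑S : Set V)ᶜ : Set V) := ⟨y, hys⟩ with hy'
  -- every vertex reaches x' or y' in the induced G3
  have hsub : ∀ a b : ((↑S : Set V)ᶜ : Set V),
      ((G.deleteEdges {s(u, v)}).induce ((↑S : Set V)ᶜ)).Adj a b →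
      s(a, b) = s(x', y') ∨ (G3.induce ((↑S : Set V)ᶜ)).Adj a b := by
    intro a b hab
    simp only [comap_adj, Function.Embedding.coe_subtype, deleteEdges_adj,
      Set.mem_singleton_iff] at hab
    by_cases h : s((a : V), (b : V)) = s(x, y)
    · left
      rcases Sym2.eq_iff.mp h with ⟨h1, h2⟩ | ⟨h1, h2⟩
      · exact Sym2.eq_iff.mpr (Or.inl ⟨Subtype.ext h1, Subtype.ext h2⟩)
      · exact Sym2.eq_iff.mpr (Or.inr ⟨Subtype.ext h1, Subtype.ext h2⟩)
    · right
      simp only [comap_adj, Function.Embedding.coe_subtype, hG3adj]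
      exact ⟨hab.1, h, hab.2⟩
  have claimB : ∀ w : ((↑S : Set V)ᶜ : Set V),
      (G3.induce ((↑S : Set V)ᶜ)).Reachable w x' ∨ (G3.induce ((↑S : Set V)ᶜ)).Reachable w y' := by
    intro w
    obtain ⟨p⟩ := (hGe'.2 S hScard).preconnected w x'
    exact aux_oneEdge hsub p
  have hnreach : ¬ (G3.induce ((↑S : Set V)ᶜ)).Reachable x' y' := by
    intro hr
    apply hdisc
    haveI : Nonempty (((↑S : Set V)ᶜ : Set V)) := ⟨x'⟩
    refine SimpleGraph.Connected.mk fun a b => ?_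
    rcases claimB a with h1 | h1 <;> rcases claimB b with h2 | h2
    · exact h1.trans h2.symm
    · exact (h1.trans hr).trans h2.symm
    · exact (h1.trans hr.symm).trans h2.symm
    · exact h1.trans h2.symm
  -- each path must meet S
  have hmeet : ∀ i, ∃ w ∈ (P i).support, w ∈ S := by
    intro i
    by_contra h
    push_neg at h
    have hQ : ∀ e ∈ (P i).edges, e ∉ ({s(u, v)} : Set (Sym2 V)) := by
      intro e he hmem
      rw [Set.mem_singleton_iff] at hmem
      exact hno i (hmem ▸ he)
    have hsupp : ∀ w ∈ ((P i).toDeleteEdges {s(u, v)} hQ).support, w ∈ ((↑S : Set V)ᶜ) := by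
      intro w hw
      rw [Walk.support_transfer] at hw
      simpa using h w hw
    exact hnreach (aux_lift hys ((P i).toDeleteEdges {s(u, v)} hQ) hsupp hxs)
  choose w hw1 hw2 using hmeet
  have hinj : Function.Injective w := by
    intro i j hij
    by_contra hne'
    rcases hdisj i j hne' (w i) (hw1 i) (hij ▸ hw1 j) with h | h
    · exact hxS (h ▸ hw2 i)
    · exact hyS (h ▸ hw2 i)
  have hle : ρ ≤ S.card := by
    have := Finset.card_le_card_of_injOn (s := (Finset.univ : Finset (Fin ρ))) w (fun i _ => hw2 i) hinj.injOn
    simpa using this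
  omega
end

section
/- Let G be a biconnected (2-vertex-connected) graph on at least 3 vertices and let S be a set of edges of G. Then G−S is biconnected if and only if for every edge (u,v) ∈ S there exist two internally vertex-disjoint u-v paths in G−S. -/
open SimpleGraph

section Helpers

variable {V : Type*} [DecidableEq V] {H : SimpleGraph V}

lemma isPath_append_aux {u x v : V} {p : H.Walk u x} {q : H.Walk x v}
    (hp : p.IsPath) (hq : q.IsPath)
    (h : ∀ y, y ∈ p.support → y ∈ q.support → y = x) : (p.append q).IsPath := by
  rw [SimpleGraph.Walk.isPath_def, SimpleGraph.Walk.support_append, List.nodup_append]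
  refine ⟨hp.support_nodup, hq.support_nodup.tail, ?_⟩
  intro y hyp z hyq hyz
  subst hyz
  have hy : y ∈ q.support := List.mem_of_mem_tail hyq
  have hyx := h y hyp hy
  subst hyx
  have hnd := hq.support_nodup
  rw [SimpleGraph.Walk.support_eq_cons] at hnd
  exact (List.nodup_cons.mp hnd).1 hyq

lemma eq_of_mem_take_drop {a b x y : V} {p : H.Walk a b} (hp : p.IsPath) (hx : x ∈ p.support)
    (h1 : y ∈ (p.takeUntil x hx).support) (h2 : y ∈ (p.dropUntil x hx).support) : y = x := by
  have hp' : ((p.takeUntil x hx).append (p.dropUntil x hx)).IsPath := by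
    rw [SimpleGraph.Walk.take_spec]; exact hp
  by_contra hne
  rw [SimpleGraph.Walk.isPath_def, SimpleGraph.Walk.support_append, List.nodup_append] at hp'
  have h2' : y ∈ (p.dropUntil x hx).support.tail := by
    rw [SimpleGraph.Walk.support_eq_cons] at h2
    rcases List.mem_cons.mp h2 with rfl | h2
    · exact absurd rfl hne
    · exact h2
  exact hp'.2.2 y h1 y h2' rfl

lemma reachable_induce_of_walk {s : Set V} {a b : V} (w : H.Walk a b)
    (hw : ∀ x ∈ w.support, x ∈ s) (ha : a ∈ s) (hb : b ∈ s) :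
    (H.induce s).Reachable ⟨a, ha⟩ ⟨b, hb⟩ := by
  induction w with
  | nil => exact SimpleGraph.Reachable.refl _
  | @cons c m d hadj q ih =>
    have hm : m ∈ s := hw m (by simp)
    refine (SimpleGraph.Adj.reachable (v := (⟨m, hm⟩ : s)) hadj).trans
      (ih (fun x hx => hw x (by simp [hx])) hm hb)

lemma exists_walk_of_induce_reachable {s : Set V} {a b : s}
    (h : (H.induce s).Reachable a b) : ∃ w : H.Walk a b, ∀ x ∈ w.support, x ∈ s := by
  obtain ⟨p⟩ := h
  refine ⟨p.map (SimpleGraph.Embedding.induce s).toHom, ?_⟩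
  intro x hx
  replace hx : x ∈ p.support.map (SimpleGraph.Embedding.induce (G := H) s).toHom := by
    rw [← SimpleGraph.Walk.support_map]; exact hx
  rw [List.mem_map] at hx
  obtain ⟨y, -, rfl⟩ := hx
  exact y.2

lemma exists_tail {T : V → Prop} :
    ∀ {a b : V} (R : H.Walk a b), ¬ T b → (∃ y ∈ R.support, T y) →
    ∃ x, T x ∧ ∃ R' : H.Walk x b, R'.IsPath ∧ (∀ z ∈ R'.support, z ∈ R.support) ∧
      ∀ y ∈ R'.support, T y → y = x := by
  intro a b R
  induction R with
  | nil =>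
    intro hb hex
    obtain ⟨y, hy, hTy⟩ := hex
    simp only [SimpleGraph.Walk.support_nil, List.mem_singleton] at hy
    subst hy; exact absurd hTy hb
  | @cons c m d hadj q ih =>
    intro hb hex
    obtain ⟨y, hy, hTy⟩ := hex
    by_cases hq : ∃ z ∈ q.support, T z
    · obtain ⟨x, hTx, R', h1, h2, h3⟩ := ih hb hq
      exact ⟨x, hTx, R', h1, fun z hz => by simp [h2 z hz], h3⟩
    · push_neg at hq
      have hyc : y = c := by
        simp only [SimpleGraph.Walk.support_cons, List.mem_cons] at hy
        rcases hy with rfl | hy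
        · rfl
        · exact absurd hTy (hq y hy)
      subst hyc
      refine ⟨y, hTy, (SimpleGraph.Walk.cons hadj q).bypass,
        SimpleGraph.Walk.bypass_isPath _,
        fun z hz => SimpleGraph.Walk.support_bypass_subset _ hz, ?_⟩
      intro z hz hTz
      have hz' := SimpleGraph.Walk.support_bypass_subset _ hz
      simp only [SimpleGraph.Walk.support_cons, List.mem_cons] at hz'
      rcases hz' with rfl | hz'
      · rfl
      · exact absurd hTz (hq z hz')

lemma build {u w v x : V} (P1 P2 : H.Walk u w)
    (hP1 : P1.IsPath) (hP2 : P2.IsPath) (hdisj : IntDisjoint P1 P2)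
    (hwv : H.Adj w v) (hv2 : v ∉ P2.support) (hxw : x ≠ w)
    (hx1 : x ∈ P1.support) (R' : H.Walk x v) (hR' : R'.IsPath)
    (key : ∀ y ∈ R'.support, y ∈ P1.support ∨ y ∈ P2.support → y = x) :
    ∃ p q : H.Walk u v, p.IsPath ∧ q.IsPath ∧ IntDisjoint p q := by
  set t := P1.takeUntil x hx1 with ht
  have htP : t.IsPath := hP1.takeUntil hx1
  have htsub : ∀ y ∈ t.support, y ∈ P1.support :=
    fun y hy => SimpleGraph.Walk.support_takeUntil_subset _ _ hy
  have hwt : w ∉ t.support := by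
    intro hw
    exact hxw ((eq_of_mem_take_drop hP1 hx1 hw
      (SimpleGraph.Walk.end_mem_support _)).symm ▸ rfl)
  have hQ2e : (SimpleGraph.Walk.cons hwv SimpleGraph.Walk.nil : H.Walk w v).IsPath := by
    simp [SimpleGraph.Walk.isPath_def, hwv.ne]
  refine ⟨t.append R', P2.append (SimpleGraph.Walk.cons hwv SimpleGraph.Walk.nil), ?_, ?_, ?_⟩
  · apply isPath_append_aux htP hR'
    intro y hyt hyR
    exact key y hyR (Or.inl (htsub y hyt))
  · apply isPath_append_aux hP2 hQ2e
    intro y hyP2 hyE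
    simp only [SimpleGraph.Walk.support_cons, SimpleGraph.Walk.support_nil,
      List.mem_cons, List.mem_singleton] at hyE
    rcases hyE with rfl | rfl | h
    · rfl
    · exact absurd hyP2 hv2
    · exact absurd h (by simp)
  · intro y hy1 hy2
    rw [SimpleGraph.Walk.mem_support_append_iff] at hy1 hy2
    rcases hy2 with hyP2 | hyE
    · rcases hy1 with hyt | hyR
      · rcases hdisj y (htsub y hyt) hyP2 with rfl | rfl
        · exact Or.inl rfl
        · exact absurd hyt hwt
      · have hyx := key y hyR (Or.inr hyP2)
        subst hyx
        rcases hdisj y hx1 hyP2 with rfl | rfl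
        · exact Or.inl rfl
        · exact absurd rfl hxw
    · simp only [SimpleGraph.Walk.support_cons, SimpleGraph.Walk.support_nil,
        List.mem_cons, List.mem_singleton] at hyE
      rcases hyE with rfl | rfl | h
      · rcases hy1 with hyt | hyR
        · exact absurd hyt hwt
        · exact absurd (key y hyR (Or.inl (SimpleGraph.Walk.end_mem_support _))).symm hxw
      · exact Or.inr rfl
      · exact absurd h (by simp)

lemma whitney (hconn : H.Connected)
    (hcut : ∀ w a b : V, a ≠ w → b ≠ w → ∃ R : H.Walk a b, w ∉ R.support) :
    ∀ n : ℕ, ∀ {u v : V}, H.dist u v = n → u ≠ v →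
      ∃ p q : H.Walk u v, p.IsPath ∧ q.IsPath ∧ IntDisjoint p q := by
  intro n
  induction n using Nat.strong_induction_on with
  | _ n ih =>
  intro u v hd hne
  have hr : H.Reachable u v := hconn.preconnected u v
  have hn0 : n ≠ 0 := by
    rintro rfl
    exact hne (hr.dist_eq_zero_iff.mp hd)
  obtain ⟨p, hp⟩ := SimpleGraph.exists_walk_of_dist_ne_zero (by rw [hd]; exact hn0)
  obtain ⟨r, hrl⟩ : ∃ r : H.Walk v u, r.length = n := ⟨p.reverse, by simp [hp, hd]⟩
  obtain ⟨w, hvw, q, hq⟩ : ∃ w, ∃ _ : H.Adj v w, ∃ q : H.Walk w u, q.length + 1 = n := by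
    cases r with
    | nil => exact absurd (by simpa using hrl.symm) hn0
    | cons h q => exact ⟨_, h, q, by simpa using hrl⟩
  have hwv : H.Adj w v := hvw.symm
  have hdw : H.dist u w = n - 1 := by
    have h1 : H.dist u w ≤ n - 1 := by
      have := SimpleGraph.dist_le q.reverse
      simp only [SimpleGraph.Walk.length_reverse] at this
      omega
    have h2 : H.dist u v ≤ H.dist u w + H.dist w v := hconn.dist_triangle
    have h3 : H.dist w v ≤ 1 := by
      simpa using SimpleGraph.dist_le (SimpleGraph.Walk.cons hwv SimpleGraph.Walk.nil)
    omega
  by_cases huw : u = w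
  · subst huw
    have hadj : H.Adj u v := hwv
    refine ⟨SimpleGraph.Walk.cons hadj SimpleGraph.Walk.nil,
      SimpleGraph.Walk.cons hadj SimpleGraph.Walk.nil, ?_, ?_, ?_⟩
    · simp [SimpleGraph.Walk.isPath_def, hne]
    · simp [SimpleGraph.Walk.isPath_def, hne]
    · intro y hy _
      simp only [SimpleGraph.Walk.support_cons, SimpleGraph.Walk.support_nil,
        List.mem_cons, List.mem_singleton] at hy
      tauto
  · have hn1 : n - 1 ≠ 0 := by
      intro h0
      exact huw ((hconn.preconnected u w).dist_eq_zero_iff.mp (by omega))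
    obtain ⟨P1, P2, hP1, hP2, hdisj⟩ := ih (n - 1) (by omega) hdw huw
    have hvw' : v ≠ w := hvw.ne
    have hdisj' : IntDisjoint P2 P1 := fun y h1 h2 => hdisj y h2 h1
    by_cases hv1 : v ∈ P1.support
    · have hv2 : v ∉ P2.support := by
        intro hv2
        rcases hdisj v hv1 hv2 with rfl | rfl
        · exact hne rfl
        · exact hvw' rfl
      exact build P1 P2 hP1 hP2 hdisj hwv hv2 hvw' hv1 SimpleGraph.Walk.nil
        SimpleGraph.Walk.IsPath.nil (by intro y hy _; simpa using hy)
    by_cases hv2 : v ∈ P2.support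
    · have hv1' : v ∉ P1.support := hv1
      exact build P2 P1 hP2 hP1 hdisj' hwv hv1' hvw' hv2 SimpleGraph.Walk.nil
        SimpleGraph.Walk.IsPath.nil (by intro y hy _; simpa using hy)
    · obtain ⟨R0, hR0w⟩ := hcut w u v huw hvw'
      obtain ⟨x, hTx, R', hR'p, hR'sub, key⟩ :=
        exists_tail (T := fun y => y ∈ P1.support ∨ y ∈ P2.support) R0
          (by simp [hv1, hv2])
          ⟨u, R0.start_mem_support, Or.inl P1.start_mem_support⟩
      have hxw : x ≠ w := by
        rintro rfl
        exact hR0w (hR'sub x R'.start_mem_support)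
      rcases hTx with hx1 | hx2
      · exact build P1 P2 hP1 hP2 hdisj hwv hv2 hxw hx1 R' hR'p key
      · exact build P2 P1 hP2 hP1 hdisj' hwv hv1 hxw hx2 R' hR'p
          (fun y hy h => key y hy h.symm)

end Helpers

theorem stmt4 {V : Type*} [Fintype V] (G : SimpleGraph V)
    (hV : 3 ≤ Fintype.card V) (hG : KConnected G 2)
    (S : Set (Sym2 V)) (hS : S ⊆ G.edgeSet) :
    KConnected (G.deleteEdges S) 2 ↔
      ∀ u v : V, G.Adj u v → s(u, v) ∈ S →
        ∃ p q : (G.deleteEdges S).Walk u v, p.IsPath ∧ q.IsPath ∧ IntDisjoint p q := by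
  classical
  set H := G.deleteEdges S with hH
  constructor
  · intro hHc u v hadj hmem
    have hconn : H.Connected := by
      have h0 := hHc.2 ∅ (by simp)
      haveI : Nonempty V := Fintype.card_pos_iff.mp (by omega)
      refine ⟨fun a b => ?_⟩
      have hr := h0.preconnected ⟨a, by simp⟩ ⟨b, by simp⟩
      obtain ⟨wk, -⟩ := exists_walk_of_induce_reachable hr
      exact ⟨wk⟩
    have hcut : ∀ w a b : V, a ≠ w → b ≠ w → ∃ R : H.Walk a b, w ∉ R.support := by
      intro w a b haw hbw
      have h1 := hHc.2 {w} (by simp)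
      have hr := h1.preconnected ⟨a, by simp [haw]⟩ ⟨b, by simp [hbw]⟩
      obtain ⟨R, hR⟩ := exists_walk_of_induce_reachable hr
      exact ⟨R, fun hmem' => by simpa using hR w hmem'⟩
    exact whitney hconn hcut (H.dist u v) rfl hadj.ne
  · intro h
    refine ⟨hG.1, ?_⟩
    intro T hT
    have hT1 : T.card ≤ 1 := by omega
    have hTne : ∃ a, a ∉ T := by
      by_contra hc
      push_neg at hc
      have hTu : T = Finset.univ := Finset.eq_univ_iff_forall.mpr hc
      rw [hTu, Finset.card_univ] at hT1
      omega
    obtain ⟨a0, ha0⟩ := hTne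
    have hGind := hG.2 T hT
    haveI : Nonempty ((↑T : Set V)ᶜ : Set V) := ⟨⟨a0, by simp [ha0]⟩⟩
    refine ⟨fun x y => ?_⟩
    obtain ⟨W, hW⟩ := exists_walk_of_induce_reachable (hGind.preconnected x y)
    have conv : ∀ {c d : V} (W : G.Walk c d),
        (∀ z ∈ W.support, z ∈ ((↑T : Set V)ᶜ)) →
        ∃ W' : H.Walk c d, ∀ z ∈ W'.support, z ∈ ((↑T : Set V)ᶜ) := by
      intro c d W
      induction W with
      | nil => intro h'; exact ⟨SimpleGraph.Walk.nil, h'⟩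
      | @cons c m d hadj q ihq =>
        intro h'
        obtain ⟨W2, hW2⟩ := ihq (fun z hz => h' z (by simp [hz]))
        by_cases he : s(c, m) ∈ S
        · obtain ⟨p, qq, hp, hqq, hdisj⟩ := h c m hadj he
          have hc : c ∈ ((↑T : Set V)ᶜ) := h' c (by simp)
          have hm : m ∈ ((↑T : Set V)ᶜ) := h' m (by simp)
          have hrw : ∃ r : H.Walk c m, ∀ z ∈ r.support, z ∈ ((↑T : Set V)ᶜ) := by
            by_cases hps : ∀ z ∈ p.support, z ∈ ((↑T : Set V)ᶜ)
            · exact ⟨p, hps⟩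
            · push_neg at hps
              obtain ⟨t1, ht1p, ht1⟩ := hps
              have ht1T : t1 ∈ T := by simpa using ht1
              refine ⟨qq, fun z hz => ?_⟩
              by_contra hzs
              have hzT : z ∈ T := by simpa using hzs
              have hzt1 : z = t1 := Finset.card_le_one.mp hT1 z hzT t1 ht1T
              subst hzt1
              rcases hdisj z ht1p hz with rfl | rfl
              · have : z ∉ T := by simpa using hc
                exact this hzT
              · have : z ∉ T := by simpa using hm
                exact this hzT
          obtain ⟨r, hr⟩ := hrw
          refine ⟨r.append W2, fun z hz => ?_⟩
          rw [SimpleGraph.Walk.mem_support_append_iff] at hz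
          rcases hz with hz | hz
          · exact hr z hz
          · exact hW2 z hz
        · have hadj' : H.Adj c m := by
            rw [hH, SimpleGraph.deleteEdges_adj]
            exact ⟨hadj, he⟩
          refine ⟨SimpleGraph.Walk.cons hadj' W2, fun z hz => ?_⟩
          simp only [SimpleGraph.Walk.support_cons, List.mem_cons] at hz
          rcases hz with rfl | hz
          · exact h' z (by simp)
          · exact hW2 z hz
    obtain ⟨W', hW'⟩ := conv W hW
    exact reachable_induce_of_walk W' hW' x.2 y.2
end

section
/- Let G be a finite simple graph. Construct a graph H as follows: the vertex set of H is V(G) ∪ E(G) ∪ {x} (all original vertices, one new vertex s_e for each edge e of G, and a new apex vertex x); for every edge e = (u,v) of G, H contains the edges (u, s_e) and (v, s_e); and x is adjacent in H to every vertex of V(G). Then for every subset X ⊆ V(G) (note X contains only original vertices, so x ∉ X and no subdivision vertex is in X), the graph H − X is connected if and only if X is an independent set in G. -/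
open SimpleGraph

/-- The graph obtained from `G` by subdividing every edge once (the subdivision
vertex of edge `e` is `Sum.inr (Sum.inl e)`) and adding a new apex vertex
`Sum.inr (Sum.inr ())` adjacent to all original vertices. -/
def apexSubdiv {V : Type*} (G : SimpleGraph V) :
    SimpleGraph (V ⊕ (G.edgeSet ⊕ Unit)) :=
  SimpleGraph.fromRel (fun a b =>
    match a, b with
    | Sum.inl u, Sum.inr (Sum.inl e) => u ∈ (e : Sym2 V)
    | Sum.inr (Sum.inr _), Sum.inl _ => True
    | _, _ => False)

lemma apexSubdiv_adj_inl_se {V : Type*} (G : SimpleGraph V) (u : V) (e : G.edgeSet)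
    (h : u ∈ (e : Sym2 V)) :
    (apexSubdiv G).Adj (Sum.inl u) (Sum.inr (Sum.inl e)) := by
  refine ⟨by simp, Or.inl h⟩

lemma apexSubdiv_adj_inl_apex {V : Type*} (G : SimpleGraph V) (u : V) :
    (apexSubdiv G).Adj (Sum.inl u) (Sum.inr (Sum.inr ())) := by
  refine ⟨by simp, Or.inr trivial⟩

lemma apexSubdiv_adj_se {V : Type*} (G : SimpleGraph V) (e : G.edgeSet)
    (c : V ⊕ (G.edgeSet ⊕ Unit)) (h : (apexSubdiv G).Adj (Sum.inr (Sum.inl e)) c) :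
    ∃ u : V, c = Sum.inl u ∧ u ∈ (e : Sym2 V) := by
  obtain ⟨hne, h | h⟩ := h
  · cases c with
    | inl u => exact absurd h not_false
    | inr z => cases z with
      | inl e' => exact absurd h not_false
      | inr u => exact absurd h not_false
  · cases c with
    | inl u => exact ⟨u, rfl, h⟩
    | inr z => cases z with
      | inl e' => exact absurd h not_false
      | inr u => exact absurd h not_false

theorem stmt9 {V : Type*} (G : SimpleGraph V) (X : Set V) :
    ((apexSubdiv G).induce
        {w : V ⊕ (G.edgeSet ⊕ Unit) | ∀ v : V, w = Sum.inl v → v ∉ X}).Connected ↔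
      ∀ a ∈ X, ∀ b ∈ X, ¬ G.Adj a b := by
  set S := {w : V ⊕ (G.edgeSet ⊕ Unit) | ∀ v : V, w = Sum.inl v → v ∉ X} with hS
  have hmemr : ∀ z : G.edgeSet ⊕ Unit, Sum.inr z ∈ S := by
    intro z v h; simp at h
  set x : S := ⟨Sum.inr (Sum.inr ()), hmemr _⟩ with hx
  constructor
  · intro hconn a ha b hb hab
    set e : G.edgeSet := ⟨s(a, b), hab⟩ with he
    set se : S := ⟨Sum.inr (Sum.inl e), hmemr _⟩ with hse
    obtain ⟨p⟩ := hconn.preconnected se x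
    have hne : se ≠ x := by simp [hse, hx]
    have hnil : ¬ p.Nil := SimpleGraph.Walk.not_nil_of_ne hne
    set c := p.getVert 1 with hc
    have h : ((apexSubdiv G).induce S).Adj se c := p.adj_snd hnil
    have h' : (apexSubdiv G).Adj (Sum.inr (Sum.inl e)) c.val := h
    obtain ⟨u, hu1, hu2⟩ := apexSubdiv_adj_se G e c.val h'
    have huX : u ∉ X := c.prop u (by rw [hu1])
    rw [he] at hu2
    simp only [Sym2.mem_iff] at hu2
    rcases hu2 with rfl | rfl
    · exact huX ha
    · exact huX hb
  · intro hind
    have hreach : ∀ a : S, ((apexSubdiv G).induce S).Reachable a x := by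
      rintro ⟨val, hmem⟩
      cases val with
      | inl u =>
        exact (Adj.reachable (by exact apexSubdiv_adj_inl_apex G u :
          ((apexSubdiv G).induce S).Adj ⟨Sum.inl u, hmem⟩ x))
      | inr z =>
        cases z with
        | inl e =>
          obtain ⟨uu, vv, huv⟩ : ∃ u v, (e : Sym2 V) = s(u, v) := by
            induction (e : Sym2 V) using Sym2.ind with
            | _ u v => exact ⟨u, v, rfl⟩
          have hadj : G.Adj uu vv := G.mem_edgeSet.mp (huv ▸ e.prop)
          have key : ∀ w : V, w ∈ (e : Sym2 V) → w ∉ X →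
              ((apexSubdiv G).induce S).Reachable ⟨Sum.inr (Sum.inl e), hmem⟩ x := by
            intro w hw hwX
            have hmw : Sum.inl w ∈ S := by
              intro v hv hvX
              rw [Sum.inl.injEq] at hv
              exact hwX (hv ▸ hvX)
            have a1 : ((apexSubdiv G).induce S).Adj ⟨Sum.inr (Sum.inl e), hmem⟩
                ⟨Sum.inl w, hmw⟩ := (apexSubdiv_adj_inl_se G w e hw).symm
            have a2 : ((apexSubdiv G).induce S).Adj ⟨Sum.inl w, hmw⟩ x :=
              apexSubdiv_adj_inl_apex G w
            exact a1.reachable.trans a2.reachable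
          by_cases hu : uu ∈ X
          · have hv : vv ∉ X := fun hv => hind uu hu vv hv hadj
            exact key vv (by rw [huv]; simp) hv
          · exact key uu (by rw [huv]; simp) hu
        | inr u => cases u; exact Reachable.refl _
    haveI : Nonempty ↥S := ⟨x⟩
    exact ⟨fun a b => (hreach a).trans (hreach b).symm⟩
end

section
/- Let D be a digraph and let (x,y) be an arc of D with x ≠ y. Define the path-contraction D ∥ (x,y) as the digraph obtained by deleting x and y, adding a new vertex z, and adding an arc (w, z) for every arc (w, x) of D with w ∉ {x,y}, and an arc (z, w) for every arc (y, w) of D with w ∉ {x,y}. Let Q be the set of arcs of D of the form (x, u) with u ≠ y, or (u, y) with u ≠ x, or (y, x). If D − Q (the digraph D with the arcs of Q deleted but all vertices retained) is strongly connected, then D ∥ (x,y) is strongly connected. -/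
/-- A digraph (given as an arc relation) is strongly connected if every vertex
can reach every other vertex by a directed path. -/
def StrongConn {V : Type*} (A : V → V → Prop) : Prop :=
  ∀ u v : V, Relation.ReflTransGen A u v

/-- The path-contraction `D ∥ (x,y)`: delete `x` and `y`, add a new vertex `z`
(here `none`), keeping the in-arcs of `x` and the out-arcs of `y` for `z`. -/
def pathContract {V : Type*} (D : V → V → Prop) (x y : V) :
    Option {z : V // z ≠ x ∧ z ≠ y} → Option {z : V // z ≠ x ∧ z ≠ y} → Prop :=
  fun a b =>
    match a, b with
    | some a, some b => D a.1 b.1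
    | some a, none => D a.1 x
    | none, some b => D y b.1
    | none, none => False

theorem stmt11 {V : Type*} (D : V → V → Prop) (x y : V) (hxy : x ≠ y)
    (harc : D x y)
    -- Q consists of the arcs (x,u) with u ≠ y, (u,y) with u ≠ x, and (y,x);
    -- D − Q is strongly connected:
    (hQ : StrongConn (fun a b => D a b ∧ ¬(a = x ∧ b ≠ y) ∧ ¬(b = y ∧ a ≠ x) ∧
      ¬(a = y ∧ b = x))) :
    StrongConn (pathContract D x y) := by
  classical
  set φ : V → Option {z : V // z ≠ x ∧ z ≠ y} :=
    fun w => if h : w ≠ x ∧ w ≠ y then some ⟨w, h⟩ else none with hφ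
  have hstep : ∀ a b : V,
      (D a b ∧ ¬(a = x ∧ b ≠ y) ∧ ¬(b = y ∧ a ≠ x) ∧ ¬(a = y ∧ b = x)) →
      Relation.ReflTransGen (pathContract D x y) (φ a) (φ b) := by
    rintro a b ⟨hab, h1, h2, h3⟩
    by_cases hax : a = x
    · have hby : b = y := by by_contra h; exact h1 ⟨hax, h⟩
      have ha : φ a = none := by simp [hφ, hax]
      have hb : φ b = none := by simp [hφ, hby, Ne.symm hxy]
      rw [ha, hb]
    · by_cases hay : a = y
      · have hbx : b ≠ x := fun h => h3 ⟨hay, h⟩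
        have hby : b ≠ y := fun h => h2 ⟨h, hax⟩
        have ha : φ a = none := by simp [hφ, hay]
        have hb : φ b = some ⟨b, hbx, hby⟩ := by simp [hφ, hbx, hby]
        rw [ha, hb]
        refine Relation.ReflTransGen.single ?_
        show D y b
        rwa [hay] at hab
      · have ha : φ a = some ⟨a, hax, hay⟩ := by simp [hφ, hax, hay]
        by_cases hbx : b = x
        · have hb : φ b = none := by simp [hφ, hbx]
          rw [ha, hb]
          refine Relation.ReflTransGen.single ?_
          show D a x
          rwa [hbx] at hab
        · have hby : b ≠ y := fun h => h2 ⟨h, hax⟩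
          have hb : φ b = some ⟨b, hbx, hby⟩ := by simp [hφ, hbx, hby]
          rw [ha, hb]
          exact Relation.ReflTransGen.single hab
  have main : ∀ a b : V,
      Relation.ReflTransGen (pathContract D x y) (φ a) (φ b) := by
    intro a b
    induction hQ a b with
    | refl => exact Relation.ReflTransGen.refl
    | tail _ hst ih => exact ih.trans (hstep _ _ hst)
  intro u v
  set ψ : Option {z : V // z ≠ x ∧ z ≠ y} → V :=
    fun o => o.elim x Subtype.val with hψ
  have hφψ : ∀ o, φ (ψ o) = o := by
    rintro (_ | ⟨a, ha1, ha2⟩)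
    · simp [hφ, hψ]
    · simp [hφ, hψ, ha1, ha2]
  have := main (ψ u) (ψ v)
  rwa [hφψ, hφψ] at this
end

section
/- Let G be a biconnected graph, let e = (x,y) be an edge such that G−e is biconnected, and suppose x and y are joined in G−e by an x-y flow {P₁, P₂} of value 2 (two internally vertex-disjoint x-y paths). Suppose e₁ is an edge of P₁ and w is an internal vertex of P₂ such that {e₁, w} is a mixed x-y cut in G−e. Let P be any path in G−e whose two endpoints u, v both lie on P₂, with u occurring no later than v in the traversal of P₂ from x to y, and which is internally vertex-disjoint from both P₁ and P₂. Then w does not lie strictly between u and v on P₂ unless w ∈ {u, v}; that is, the subpath of P₂ from u to v contains w only possibly as an endpoint. -/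
open SimpleGraph

private lemma indexOf_concat {V : Type*} [DecidableEq V] {l₁ : List V} {a : V}
    (hnd : (l₁ ++ [a]).Nodup) : (l₁ ++ [a]).idxOf a = (l₁ ++ [a]).length - 1 := by
  rw [List.nodup_append] at hnd
  have hnm : a ∉ l₁ := fun hm => hnd.2.2 a hm a (List.mem_singleton_self a) rfl
  rw [List.idxOf_append_of_notMem hnm]
  simp

private lemma take_le {V : Type*} [DecidableEq V] {G : SimpleGraph V} {x y u w : V}
    (p : G.Walk x y) (hu : u ∈ p.support) (hnd : p.support.Nodup)
    (hw : w ∈ (p.takeUntil u hu).support) :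
    p.support.idxOf w ≤ p.support.idxOf u := by
  set T := p.takeUntil u hu with hT
  have hsplit : p.support = T.support ++ (p.dropUntil u hu).support.tail := by
    conv_lhs => rw [← p.take_spec hu]
    rw [Walk.support_append]
  have hTnd : T.support.Nodup := by
    rw [hsplit, List.nodup_append] at hnd; exact hnd.1
  have hTne : T.support ≠ [] := T.support_ne_nil
  have hconcat : T.support.dropLast ++ [u] = T.support := by
    have h1 := T.support.dropLast_append_getLast hTne
    have h2 : T.support.getLast hTne = u := T.getLast_support
    rw [h2] at h1
    exact h1
  have hiu : T.support.idxOf u = T.support.length - 1 := by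
    rw [← hconcat]
    exact indexOf_concat (hconcat.symm ▸ hTnd)
  have huT : u ∈ T.support := T.end_mem_support
  rw [hsplit, List.idxOf_append_of_mem hw, List.idxOf_append_of_mem huT, hiu]
  have := List.idxOf_lt_length_iff.mpr hw
  omega

private lemma drop_ge {V : Type*} [DecidableEq V] {G : SimpleGraph V} {x y v w : V}
    (p : G.Walk x y) (hv : v ∈ p.support) (hnd : p.support.Nodup)
    (hw : w ∈ (p.dropUntil v hv).support) :
    p.support.idxOf v ≤ p.support.idxOf w := by
  set T := p.takeUntil v hv with hT
  set D := p.dropUntil v hv with hD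
  have hsplit : p.support = T.support ++ D.support.tail := by
    conv_lhs => rw [← p.take_spec hv]
    rw [Walk.support_append]
  by_cases hwv : w = v
  · subst hwv; exact le_refl _
  · have hwtail : w ∈ D.support.tail := by
      rw [D.support_eq_cons, List.mem_cons] at hw
      rcases hw with h | h
      · exact absurd h hwv
      · exact h
    have hwT : w ∉ T.support := by
      rw [hsplit, List.nodup_append] at hnd
      exact fun h => hnd.2.2 w h w hwtail rfl
    have hTnd : T.support.Nodup := by
      rw [hsplit, List.nodup_append] at hnd; exact hnd.1
    have hTne : T.support ≠ [] := T.support_ne_nil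
    have hconcat : T.support.dropLast ++ [v] = T.support := by
      have h1 := T.support.dropLast_append_getLast hTne
      have h2 : T.support.getLast hTne = v := T.getLast_support
      rw [h2] at h1
      exact h1
    have hiu : T.support.idxOf v = T.support.length - 1 := by
      rw [← hconcat]
      exact indexOf_concat (hconcat.symm ▸ hTnd)
    have hvT : v ∈ T.support := T.end_mem_support
    rw [hsplit, List.idxOf_append_of_mem hvT, List.idxOf_append_of_notMem hwT, hiu]
    have : 0 < T.support.length := List.length_pos_iff.mpr hTne
    omega

theorem stmt13 {V : Type*} [Fintype V] [DecidableEq V] (G : SimpleGraph V)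
    (x y : V) (hadj : G.Adj x y)
    (hG : KConnected G 2) (hGe : KConnected (G.deleteEdges {s(x, y)}) 2)
    -- {P₁, P₂} is an x-y flow of value 2 in G - e
    (P₁ P₂ : (G.deleteEdges {s(x, y)}).Walk x y)
    (hP₁ : P₁.IsPath) (hP₂ : P₂.IsPath) (hdisj : IntDisjoint P₁ P₂)
    -- e₁ is an edge of P₁ and w an internal vertex of P₂ with {e₁, w} a
    -- mixed x-y cut in G - e
    (e₁ : Sym2 V) (he₁ : e₁ ∈ P₁.edges)
    (w : V) (hw : w ∈ P₂.support) (hwx : w ≠ x) (hwy : w ≠ y)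
    (hcut : ∀ p : (G.deleteEdges {s(x, y)}).Walk x y, e₁ ∈ p.edges ∨ w ∈ p.support)
    -- P is a path in G - e with both endpoints u, v on P₂ (u no later than v),
    -- internally vertex-disjoint from P₁ and P₂
    (u v : V) (hu : u ∈ P₂.support) (hv : v ∈ P₂.support)
    (huv : P₂.support.idxOf u ≤ P₂.support.idxOf v)
    (P : (G.deleteEdges {s(x, y)}).Walk u v) (hP : P.IsPath)
    (hint : ∀ z ∈ P.support, z ≠ u → z ≠ v → z ∉ P₁.support ∧ z ∉ P₂.support)
    -- if w lies on the subpath of P₂ from u to v …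
    (h1 : P₂.support.idxOf u ≤ P₂.support.idxOf w)
    (h2 : P₂.support.idxOf w ≤ P₂.support.idxOf v) :
    -- … then it is one of its endpoints
    w = u ∨ w = v := by
  by_contra hcon
  push_neg at hcon
  obtain ⟨hwu, hwv⟩ := hcon
  have hnd := hP₂.2
  revert he₁ hcut
  induction e₁ using Sym2.ind with
  | _ a b =>
  intro he₁ hcut
  have haP₁ : a ∈ P₁.support := Walk.fst_mem_support_of_mem_edges P₁ he₁
  have hbP₁ : b ∈ P₁.support := Walk.snd_mem_support_of_mem_edges P₁ he₁
  have hab : a ≠ b := ((SimpleGraph.mem_edgeSet _).mp (P₁.edges_subset_edgeSet he₁)).ne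
  have hxy : s(a, b) ≠ s(x, y) := by
    intro h
    have h2 := P₁.edges_subset_edgeSet he₁
    rw [h, edgeSet_deleteEdges] at h2
    exact h2.2 rfl
  have hpair : ∀ c : V, c ∈ P₁.support → c ∈ P₂.support → c = x ∨ c = y := hdisj
  have hmk : ∀ c d : V, c ≠ d → (c = x ∨ c = y) → (d = x ∨ d = y) → s(c, d) = s(x, y) := by
    rintro c d hcd (rfl | rfl) (rfl | rfl)
    · exact absurd rfl hcd
    · rfl
    · exact Sym2.eq_swap
    · exact absurd rfl hcd
  have he₁P₂ : s(a, b) ∉ P₂.edges := by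
    intro h
    exact hxy (hmk a b hab
      (hpair a haP₁ (Walk.fst_mem_support_of_mem_edges P₂ h))
      (hpair b hbP₁ (Walk.snd_mem_support_of_mem_edges P₂ h)))
  have he₁P : s(a, b) ∉ P.edges := by
    intro h
    have haP : a ∈ P.support := Walk.fst_mem_support_of_mem_edges P h
    have hbP : b ∈ P.support := Walk.snd_mem_support_of_mem_edges P h
    have haP₂ : a ∈ P₂.support := by
      by_cases h' : a = u
      · exact h' ▸ hu
      by_cases h'' : a = v
      · exact h'' ▸ hv
      exact absurd haP₁ (hint a haP h' h'').1
    have hbP₂ : b ∈ P₂.support := by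
      by_cases h' : b = u
      · exact h' ▸ hu
      by_cases h'' : b = v
      · exact h'' ▸ hv
      exact absurd hbP₁ (hint b hbP h' h'').1
    exact hxy (hmk a b hab (hpair a haP₁ haP₂) (hpair b hbP₁ hbP₂))
  rcases hcut ((P₂.takeUntil u hu).append (P.append (P₂.dropUntil v hv))) with h | h
  · rw [Walk.edges_append, Walk.edges_append, List.mem_append, List.mem_append] at h
    rcases h with h | h | h
    · exact he₁P₂ (P₂.edges_takeUntil_subset hu h)
    · exact he₁P h
    · exact he₁P₂ (P₂.edges_dropUntil_subset hv h)
  · rw [Walk.mem_support_append_iff, Walk.mem_support_append_iff] at h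
    rcases h with h | h | h
    · have hle := take_le P₂ hu hnd h
      have : w = u := (List.idxOf_inj hw).mp (le_antisymm hle h1)
      exact hwu this
    · exact (hint w h hwu hwv).2 hw
    · have hge := drop_ge P₂ hv hnd h
      have : w = v := (List.idxOf_inj hw).mp (le_antisymm h2 hge)
      exact hwv this
end

section
/- Let G be a biconnected graph, e = (x,y) an edge with G−e biconnected, and {P₁, P₂} an x-y flow of value 2 in G−e. Let e_i and e_j be edges of P₁ such that, traversing P₁ from x to y, e_i occurs strictly before e_j, and let w, w' be internal vertices of P₂ such that {e_i, w} and {e_j, w'} are both mixed x-y cuts in G−e. Suppose additionally there exists a path P in G−e, internally vertex-disjoint from P₁ and P₂, whose one endpoint lies on P₁ strictly between e_i and e_j and whose other endpoint v lies in the interior of P₂. Then w occurs no later than v and v occurs no later than w' in the traversal of P₂ from x to y; in particular w occurs no later than w'. -/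
open SimpleGraph

lemma indexOf_getLast_of_nodup {α : Type*} [DecidableEq α] {l : List α} (h : l ≠ [])
    (hn : l.Nodup) : l.idxOf (l.getLast h) = l.length - 1 := by
  obtain ⟨a, ha⟩ : ∃ a, l.getLast h = a := ⟨_, rfl⟩
  have hd : l.dropLast ++ [a] = l := by rw [← ha]; exact List.dropLast_append_getLast h
  have hnm : a ∉ l.dropLast := by
    rw [← hd, List.nodup_append] at hn
    intro hm
    exact hn.2.2 _ hm _ (List.mem_singleton_self _) rfl
  rw [ha, ← hd]
  rw [List.idxOf_append_of_notMem hnm]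
  simp [List.idxOf_cons_self]

lemma indexOf_eq_of_getLast {α : Type*} [DecidableEq α] {l : List α} (h : l ≠ [])
    (hn : l.Nodup) {z : α} (hz : l.getLast h = z) : l.idxOf z = l.length - 1 := by
  subst hz
  exact indexOf_getLast_of_nodup h hn

lemma idx_le_of_mem_takeUntil {V : Type*} [DecidableEq V] {G : SimpleGraph V} {x y z u : V}
    {p : G.Walk x y} (hp : p.IsPath) (hz : z ∈ p.support)
    (hu : u ∈ (p.takeUntil z hz).support) :
    p.support.idxOf u ≤ p.support.idxOf z := by
  have hsupp : p.support = (p.takeUntil z hz).support ++ (p.dropUntil z hz).support.tail := by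
    conv_lhs => rw [← p.take_spec hz]
    rw [Walk.support_append]
  have hz' : z ∈ (p.takeUntil z hz).support := Walk.end_mem_support _
  have htn : (p.takeUntil z hz).support.Nodup := (hp.takeUntil hz).support_nodup
  rw [hsupp, List.idxOf_append_of_mem hu, List.idxOf_append_of_mem hz']
  have hlast : (p.takeUntil z hz).support.getLast (Walk.support_ne_nil _) = z :=
    Walk.getLast_support _
  have h1 : (p.takeUntil z hz).support.idxOf z
      = (p.takeUntil z hz).support.length - 1 :=
    indexOf_eq_of_getLast _ htn hlast
  have h2 := List.idxOf_lt_length_iff.2 hu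
  omega

lemma idx_ge_of_mem_dropUntil {V : Type*} [DecidableEq V] {G : SimpleGraph V} {x y z u : V}
    {p : G.Walk x y} (hp : p.IsPath) (hz : z ∈ p.support)
    (hu : u ∈ (p.dropUntil z hz).support) :
    p.support.idxOf z ≤ p.support.idxOf u := by
  have hsupp : p.support = (p.takeUntil z hz).support ++ (p.dropUntil z hz).support.tail := by
    conv_lhs => rw [← p.take_spec hz]
    rw [Walk.support_append]
  have hz' : z ∈ (p.takeUntil z hz).support := Walk.end_mem_support _
  have htn : (p.takeUntil z hz).support.Nodup := (hp.takeUntil hz).support_nodup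
  have hlast : (p.takeUntil z hz).support.getLast (Walk.support_ne_nil _) = z :=
    Walk.getLast_support _
  have h1 : (p.takeUntil z hz).support.idxOf z
      = (p.takeUntil z hz).support.length - 1 :=
    indexOf_eq_of_getLast _ htn hlast
  by_cases huz : u = z
  · subst huz; exact le_refl _
  · have hut : u ∈ (p.dropUntil z hz).support.tail := by
      have heq := (p.dropUntil z hz).support_eq_cons
      rw [heq] at hu
      rcases List.mem_cons.1 hu with h' | h'
      · exact absurd h' huz
      · exact h'
    have hun : u ∉ (p.takeUntil z hz).support := by
      intro hm
      have hnd : p.support.Nodup := hp.support_nodup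
      rw [hsupp, List.nodup_append] at hnd
      exact hnd.2.2 _ hm _ hut rfl
    rw [hsupp, List.idxOf_append_of_mem hz', List.idxOf_append_of_notMem hun]
    have h3 : (p.takeUntil z hz).support.length ≠ 0 := by
      simpa using Walk.support_ne_nil (p.takeUntil z hz)
    omega

lemma idx_start_eq_zero {V : Type*} [DecidableEq V] {G : SimpleGraph V} {x y : V}
    (p : G.Walk x y) : p.support.idxOf x = 0 := by
  rw [p.support_eq_cons]
  exact List.idxOf_cons_self

lemma idx_le_end {V : Type*} [DecidableEq V] {G : SimpleGraph V} {x y u : V}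
    {p : G.Walk x y} (hp : p.IsPath) (hu : u ∈ p.support) :
    p.support.idxOf u ≤ p.support.idxOf y := by
  have hlast : p.support.getLast (Walk.support_ne_nil _) = y := Walk.getLast_support _
  have h1 : p.support.idxOf y = p.support.length - 1 :=
    indexOf_eq_of_getLast _ hp.support_nodup hlast
  have h2 := List.idxOf_lt_length_iff.2 hu
  omega

theorem stmt14 {V : Type*} [Fintype V] [DecidableEq V] (G : SimpleGraph V)
    (x y : V) (hadj : G.Adj x y)
    (hG : KConnected G 2) (hGe : KConnected (G.deleteEdges {s(x, y)}) 2)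
    -- {P₁, P₂} is an x-y flow of value 2 in G - e
    (P₁ P₂ : (G.deleteEdges {s(x, y)}).Walk x y)
    (hP₁ : P₁.IsPath) (hP₂ : P₂.IsPath) (hdisj : IntDisjoint P₁ P₂)
    -- e_i = (ui,vi) and e_j = (uj,vj) are edges of P₁ (traversed from x to y),
    -- with e_i strictly before e_j
    (ui vi uj vj : V)
    (hei : s(ui, vi) ∈ P₁.edges) (hej : s(uj, vj) ∈ P₁.edges)
    (hconsi : P₁.support.idxOf vi = P₁.support.idxOf ui + 1)
    (hconsj : P₁.support.idxOf vj = P₁.support.idxOf uj + 1)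
    (hij : P₁.support.idxOf vi ≤ P₁.support.idxOf uj)
    -- w, w' are internal vertices of P₂ with {e_i, w} and {e_j, w'} mixed x-y
    -- cuts in G - e
    (w w' : V) (hw : w ∈ P₂.support) (hwx : w ≠ x) (hwy : w ≠ y)
    (hw' : w' ∈ P₂.support) (hw'x : w' ≠ x) (hw'y : w' ≠ y)
    (hcutw : ∀ p : (G.deleteEdges {s(x, y)}).Walk x y,
      s(ui, vi) ∈ p.edges ∨ w ∈ p.support)
    (hcutw' : ∀ p : (G.deleteEdges {s(x, y)}).Walk x y,
      s(uj, vj) ∈ p.edges ∨ w' ∈ p.support)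
    -- P is a path in G - e, internally vertex-disjoint from P₁ and P₂, with one
    -- endpoint p₀ on P₁ strictly between e_i and e_j, and the other endpoint v
    -- in the interior of P₂
    (p₀ v : V) (hp₀ : p₀ ∈ P₁.support)
    (hp₀l : P₁.support.idxOf vi ≤ P₁.support.idxOf p₀)
    (hp₀r : P₁.support.idxOf p₀ ≤ P₁.support.idxOf uj)
    (hvP₂ : v ∈ P₂.support) (hvx : v ≠ x) (hvy : v ≠ y)
    (P : (G.deleteEdges {s(x, y)}).Walk p₀ v) (hP : P.IsPath)
    (hint : ∀ z ∈ P.support, z ≠ p₀ → z ≠ v → z ∉ P₁.support ∧ z ∉ P₂.support) :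
    P₂.support.idxOf w ≤ P₂.support.idxOf v ∧
      P₂.support.idxOf v ≤ P₂.support.idxOf w' := by

  classical
  have hui : ui ∈ P₁.support := P₁.fst_mem_support_of_mem_edges hei
  have hvi : vi ∈ P₁.support := P₁.snd_mem_support_of_mem_edges hei
  have huj : uj ∈ P₁.support := P₁.fst_mem_support_of_mem_edges hej
  have hvj : vj ∈ P₁.support := P₁.snd_mem_support_of_mem_edges hej
  have hx0 : P₁.support.idxOf x = 0 := idx_start_eq_zero P₁
  have hvjy : P₁.support.idxOf vj ≤ P₁.support.idxOf y := idx_le_end hP₁ hvj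
  have hvix : vi ≠ x := by intro h; rw [h, hx0] at hconsi; omega
  have hujx : uj ≠ x := by intro h; rw [h, hx0] at hij; omega
  have hviy : vi ≠ y := by intro h; subst h; omega
  have hujy : uj ≠ y := by intro h; subst h; omega
  have hwP₁ : w ∉ P₁.support := fun h => ((hdisj w h hw).elim hwx hwy)
  have hw'P₁ : w' ∉ P₁.support := fun h => ((hdisj w' h hw').elim hw'x hw'y)
  have hvP₁ : v ∉ P₁.support := fun h => ((hdisj v h hvP₂).elim hvx hvy)
  have hviP₂ : vi ∉ P₂.support := fun h => ((hdisj vi hvi h).elim hvix hviy)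
  have hujP₂ : uj ∉ P₂.support := fun h => ((hdisj uj huj h).elim hujx hujy)
  constructor
  · -- idx w ≤ idx v, via Q₂ = P₂[x..v] ++ P.reverse ++ P₁[p₀..y]
    rcases hcutw ((P₂.takeUntil v hvP₂).append
        (P.reverse.append (P₁.dropUntil p₀ hp₀))) with hedge | hsup
    · exfalso
      rw [Walk.edges_append, Walk.edges_append, List.mem_append, List.mem_append] at hedge
      rcases hedge with h1 | h2 | h3
      · exact hviP₂ (P₂.snd_mem_support_of_mem_edges (Walk.edges_takeUntil_subset _ _ h1))
      · rw [Walk.edges_reverse, List.mem_reverse] at h2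
        have hmu : ui ∈ P.support := Walk.fst_mem_support_of_mem_edges _ h2
        have hmv : vi ∈ P.support := Walk.snd_mem_support_of_mem_edges _ h2
        by_cases h : vi = p₀
        · have hup₀ : ui ≠ p₀ := by
            intro hh; rw [h] at hconsi; rw [hh] at hconsi; omega
          have huv : ui ≠ v := by intro hh; rw [← hh] at hvP₁; exact hvP₁ hui
          exact (hint ui hmu hup₀ huv).1 hui
        · by_cases h' : vi = v
          · rw [← h'] at hvP₁; exact hvP₁ hvi
          · exact (hint vi hmv h h').1 hvi
      · have hmu : ui ∈ (P₁.dropUntil p₀ hp₀).support :=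
          Walk.fst_mem_support_of_mem_edges _ h3
        have := idx_ge_of_mem_dropUntil hP₁ hp₀ hmu
        omega
    · rw [Walk.mem_support_append_iff, Walk.mem_support_append_iff] at hsup
      rcases hsup with h1 | h2 | h3
      · exact idx_le_of_mem_takeUntil hP₂ hvP₂ h1
      · rw [Walk.support_reverse, List.mem_reverse] at h2
        by_cases h : w = p₀
        · exact absurd (h ▸ hp₀) hwP₁
        · by_cases h' : w = v
          · simp [h']
          · exact absurd hw (hint w h2 h h').2
      · exact absurd (Walk.support_dropUntil_subset _ _ h3) hwP₁
  · -- idx v ≤ idx w', via Q₁ = P₁[x..p₀] ++ P ++ P₂[v..y]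
    rcases hcutw' ((P₁.takeUntil p₀ hp₀).append
        (P.append (P₂.dropUntil v hvP₂))) with hedge | hsup
    · exfalso
      rw [Walk.edges_append, Walk.edges_append, List.mem_append, List.mem_append] at hedge
      rcases hedge with h1 | h2 | h3
      · have hm : vj ∈ (P₁.takeUntil p₀ hp₀).support :=
          Walk.snd_mem_support_of_mem_edges _ h1
        have := idx_le_of_mem_takeUntil hP₁ hp₀ hm
        omega
      · have hmu : uj ∈ P.support := Walk.fst_mem_support_of_mem_edges _ h2
        have hmv : vj ∈ P.support := Walk.snd_mem_support_of_mem_edges _ h2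
        by_cases h : uj = p₀
        · have hvjp₀ : vj ≠ p₀ := by
            intro hh; rw [h] at hconsj; rw [hh] at hconsj; omega
          have hvjv : vj ≠ v := by intro hh; rw [← hh] at hvP₁; exact hvP₁ hvj
          exact (hint vj hmv hvjp₀ hvjv).1 hvj
        · by_cases h' : uj = v
          · rw [← h'] at hvP₁; exact hvP₁ huj
          · exact (hint uj hmu h h').1 huj
      · exact hujP₂ (P₂.fst_mem_support_of_mem_edges (Walk.edges_dropUntil_subset _ _ h3))
    · rw [Walk.mem_support_append_iff, Walk.mem_support_append_iff] at hsup
      rcases hsup with h1 | h2 | h3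
      · exact absurd (Walk.support_takeUntil_subset _ _ h1) hw'P₁
      · by_cases h : w' = p₀
        · exact absurd (h ▸ hp₀) hw'P₁
        · by_cases h' : w' = v
          · simp [h']
          · exact absurd hw' (hint w' h2 h h').2
      · exact idx_ge_of_mem_dropUntil hP₂ hvP₂ h3
end

section
/- Let G be a graph, x and y distinct non-adjacent vertices of G with κ_G(x,y) = 2, and let {e₁, w} be a mixed x-y cut in G, where e₁ is an edge and w a vertex not incident to e₁. Let A be the vertex set of the connected component of x in G − w − e₁ and B that of y. Then e₁ has one endpoint in A and one endpoint in B, and moreover every edge of G with one endpoint in A and the other in B equals e₁ (all other A-B connections pass through w). -/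
open SimpleGraph

lemma aux_reach {V : Type*} {G : SimpleGraph V} {w a b s : V} :
    ∀ {u z : V} (r : G.Walk u z), w ∉ r.support →
      (∃ p : G.Walk s u, w ∉ p.support ∧ s(a, b) ∉ p.edges) →
      (∃ p : G.Walk s z, w ∉ p.support ∧ s(a, b) ∉ p.edges) ∨
      (∃ p : G.Walk s a, w ∉ p.support ∧ s(a, b) ∉ p.edges) ∨
      (∃ p : G.Walk s b, w ∉ p.support ∧ s(a, b) ∉ p.edges) := by
  intro u z r
  induction r with
  | nil => exact fun _ hu => Or.inl hu
  | @cons u v z h r ih =>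
    intro hw hu
    have hwr : w ∉ r.support := fun h' => hw (by simp [Walk.support_cons, h'])
    by_cases he : s(u, v) = s(a, b)
    · rw [Sym2.eq_iff] at he
      rcases he with ⟨h1, h2⟩ | ⟨h1, h2⟩
      · subst h1; exact Or.inr (Or.inl hu)
      · subst h1; exact Or.inr (Or.inr hu)
    · obtain ⟨p, hpw, hpe⟩ := hu
      have hwv : w ≠ v := fun h' => hwr (h' ▸ r.start_mem_support)
      refine ih hwr ⟨p.concat h, ?_, ?_⟩
      · intro h'
        rw [Walk.support_concat, List.mem_append] at h'
        rcases h' with h' | h'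
        · exact hpw h'
        · simp at h'; exact hwv h'
      · intro h'
        rw [Walk.edges_concat, List.concat_eq_append, List.mem_append] at h'
        rcases h' with h' | h'
        · exact hpe h'
        · simp at h'; exact he (by rw [Sym2.eq_iff]; tauto)

theorem stmt15 {V : Type*} (G : SimpleGraph V) (x y : V) (hxy : x ≠ y)
    (hnadj : ¬ G.Adj x y)
    -- κ_G(x,y) = 2 : there are two internally disjoint x-y paths ...
    (hflow2 : ∃ p q : G.Walk x y, p.IsPath ∧ q.IsPath ∧ IntDisjoint p q)
    -- ... but no three pairwise internally disjoint x-y paths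
    (hno3 : ¬ ∃ Q : Fin 3 → G.Walk x y, (∀ i, (Q i).IsPath) ∧
      ∀ i j, i ≠ j → IntDisjoint (Q i) (Q j))
    -- {e₁, w} is a mixed x-y cut, e₁ = (a,b) an edge, w a vertex not incident to e₁
    (a b : V) (hab : G.Adj a b) (w : V) (hwa : w ≠ a) (hwb : w ≠ b)
    (hwx : w ≠ x) (hwy : w ≠ y)
    (hcut : ∀ p : G.Walk x y, s(a, b) ∈ p.edges ∨ w ∈ p.support)
    -- A and B are the vertex sets of the components of x and y in G − w − e₁
    (A B : Set V)
    (hA : A = {z : V | ∃ p : G.Walk x z, w ∉ p.support ∧ s(a, b) ∉ p.edges})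
    (hB : B = {z : V | ∃ p : G.Walk y z, w ∉ p.support ∧ s(a, b) ∉ p.edges}) :
    ((a ∈ A ∧ b ∈ B) ∨ (a ∈ B ∧ b ∈ A)) ∧
      ∀ c d : V, G.Adj c d → c ∈ A → d ∈ B → s(c, d) = s(a, b) := by
  subst hA hB
  -- x ∈ A and y ∈ B via nil walks
  have hxA : ∃ p : G.Walk x x, w ∉ p.support ∧ s(a, b) ∉ p.edges :=
    ⟨Walk.nil, by simp [hwx], by simp⟩
  have hyB : ∃ p : G.Walk y y, w ∉ p.support ∧ s(a, b) ∉ p.edges :=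
    ⟨Walk.nil, by simp [hwy], by simp⟩
  -- A and B are disjoint
  have hdisj : ∀ z : V, (∃ p : G.Walk x z, w ∉ p.support ∧ s(a, b) ∉ p.edges) →
      (∃ p : G.Walk y z, w ∉ p.support ∧ s(a, b) ∉ p.edges) → False := by
    rintro z ⟨p1, h1w, h1e⟩ ⟨p2, h2w, h2e⟩
    rcases hcut (p1.append p2.reverse) with h | h
    · rw [Walk.edges_append, List.mem_append, Walk.edges_reverse, List.mem_reverse] at h
      tauto
    · rw [Walk.mem_support_append_iff, Walk.support_reverse, List.mem_reverse] at h
      tauto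
  -- a walk from x to y avoiding w
  obtain ⟨p, q, hp, hq, hdis⟩ := hflow2
  have hr : ∃ r : G.Walk x y, w ∉ r.support := by
    by_cases hwp : w ∈ p.support
    · refine ⟨q, fun hwq => ?_⟩
      rcases hdis w hwp hwq with h | h
      · exact hwx h
      · exact hwy h
    · exact ⟨p, hwp⟩
  obtain ⟨r, hrw⟩ := hr
  have haA : (∃ p : G.Walk x a, w ∉ p.support ∧ s(a, b) ∉ p.edges) ∨
      (∃ p : G.Walk x b, w ∉ p.support ∧ s(a, b) ∉ p.edges) := by
    rcases aux_reach r hrw hxA with h | h | h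
    · obtain ⟨p', hpw, hpe⟩ := h
      rcases hcut p' with h' | h' <;> tauto
    · exact Or.inl h
    · exact Or.inr h
  have haB : (∃ p : G.Walk y a, w ∉ p.support ∧ s(a, b) ∉ p.edges) ∨
      (∃ p : G.Walk y b, w ∉ p.support ∧ s(a, b) ∉ p.edges) := by
    have hrw' : w ∉ r.reverse.support := by rwa [Walk.support_reverse, List.mem_reverse]
    rcases aux_reach r.reverse hrw' hyB with h | h | h
    · obtain ⟨p', hpw, hpe⟩ := h
      rcases hcut p'.reverse with h' | h'
      · rw [Walk.edges_reverse, List.mem_reverse] at h'; tauto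
      · rw [Walk.support_reverse, List.mem_reverse] at h'; tauto
    · exact Or.inl h
    · exact Or.inr h
  constructor
  · rcases haA with ha | hb
    · rcases haB with ha' | hb'
      · exact absurd (hdisj a ha ha') (fun h => h)
      · exact Or.inl ⟨ha, hb'⟩
    · rcases haB with ha' | hb'
      · exact Or.inr ⟨ha', hb⟩
      · exact absurd (hdisj b hb hb') (fun h => h)
  · rintro c d hcd ⟨p1, h1w, h1e⟩ ⟨p2, h2w, h2e⟩
    by_contra hne
    rcases hcut (p1.append (Walk.cons hcd p2.reverse)) with h | h
    · rw [Walk.edges_append, List.mem_append, Walk.edges_cons, List.mem_cons,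
        Walk.edges_reverse, List.mem_reverse] at h
      rcases h with h | h | h
      · exact h1e h
      · exact hne h.symm
      · exact h2e h
    · rw [Walk.mem_support_append_iff, Walk.support_cons, List.mem_cons,
        Walk.support_reverse, List.mem_reverse] at h
      rcases h with h | h | h
      · exact h1w h
      · exact h1w (h ▸ p1.end_mem_support)
      · exact h2w h
end
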